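/- Let P : C^op → InfSL be an elementary doctrine with comprehensive diagonals. The functor ∇_P : C → Q_P sending f : X → Y to [f] : (X, δ_X) → (Y, δ_Y) is full and faithful and preserves binary products. -/

import Mathlib

open CategoryTheory CategoryTheory.Limits Opposite

noncomputable section

universe w v u

namespace DoctrinePaper

variable {C : Type u} [Category.{v} C] [HasFiniteProducts C]

/-- The fiber of a primary doctrine `P : Cᵒᵖ ⥤ SemilatInfCat` over an object `A`. -/
abbrev Fib (P : Cᵒᵖ ⥤ SemilatInfCat.{w}) (A : C) : Type w :=
  ↥(P.obj (op A))

/-- Reindexing along an arrow `f : A ⟶ B`. -/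
def rmap (P : Cᵒᵖ ⥤ SemilatInfCat.{w}) {A B : C} (f : A ⟶ B) :
    Fib P B → Fib P A :=
  fun x => (P.map f.op) x

variable (P : Cᵒᵖ ⥤ SemilatInfCat.{w})

/-- An elementary doctrine: fibered equalities `δ A ∈ P (A ⨯ A)` such that
`E_e(α) = P⟨pr1,pr2⟩(α) ⊓ P⟨pr2,pr3⟩(δ A)` is left adjoint to reindexing along
`e = ⟨pr1,pr2,pr2⟩ : X ⨯ A ⟶ (X ⨯ A) ⨯ A`. -/
structure IsElementary where
  δ : ∀ A : C, Fib P (A ⨯ A)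
  adj :
    ∀ (X A : C) (α : Fib P (X ⨯ A)) (β : Fib P ((X ⨯ A) ⨯ A)),
      (rmap P (prod.fst : (X ⨯ A) ⨯ A ⟶ X ⨯ A) α ⊓
          rmap P (prod.lift (prod.fst ≫ prod.snd) prod.snd : (X ⨯ A) ⨯ A ⟶ A ⨯ A) (δ A) ≤ β)
        ↔ α ≤ rmap P (prod.lift (𝟙 (X ⨯ A)) prod.snd : X ⨯ A ⟶ (X ⨯ A) ⨯ A) β

/-- A `P`-equivalence relation over `A`. -/
structure IsEqRel (hE : IsElementary P) {A : C} (ρ : Fib P (A ⨯ A)) : Prop where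
  refl : hE.δ A ≤ ρ
  symm : ρ = rmap P (prod.lift prod.snd prod.fst : A ⨯ A ⟶ A ⨯ A) ρ
  trans :
    rmap P (prod.fst : (A ⨯ A) ⨯ A ⟶ A ⨯ A) ρ ⊓
        rmap P (prod.lift (prod.fst ≫ prod.snd) prod.snd : (A ⨯ A) ⨯ A ⟶ A ⨯ A) ρ ≤
      rmap P (prod.lift (prod.fst ≫ prod.fst) prod.snd : (A ⨯ A) ⨯ A ⟶ A ⨯ A) ρ

/-- An elementary existential doctrine, together with the induced left adjoints
`∃_f` along all arrows, satisfying the adjunction law, Frobenius reciprocity, and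
the Beck–Chevalley condition along pullbacks of projections. -/
structure IsExistential extends IsElementary P where
  E : ∀ {A B : C}, (A ⟶ B) → Fib P A → Fib P B
  adjE : ∀ {A B : C} (f : A ⟶ B) (α : Fib P A) (β : Fib P B),
    E f α ≤ β ↔ α ≤ rmap P f β
  frobenius : ∀ {A B : C} (f : A ⟶ B) (α : Fib P A) (β : Fib P B),
    E f (α ⊓ rmap P f β) = E f α ⊓ β
  beckChevalley : ∀ {B A A' : C} (f : A' ⟶ A) (β : Fib P (B ⨯ A)),
    E (prod.snd : B ⨯ A' ⟶ A') (rmap P (prod.map (𝟙 B) f) β) =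
      rmap P f (E (prod.snd : B ⨯ A ⟶ A) β)

/-- Descent data for a relation `ρ` over `A`. -/
def Des {A : C} (ρ : Fib P (A ⨯ A)) : Set (Fib P A) :=
  {α | rmap P (prod.fst : A ⨯ A ⟶ A) α ⊓ ρ ≤ rmap P (prod.snd : A ⨯ A ⟶ A) α}

/-- Comprehensive diagonals: `f = g` iff `⊤ = P⟨f,g⟩(δ)`. -/
def ComprehensiveDiagonals (hE : IsElementary P) : Prop :=
  ∀ {X A : C} (f g : X ⟶ A), f = g ↔ rmap P (prod.lift f g) (hE.δ A) = ⊤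

/-- (Weak) comprehension structure. -/
structure Comprehension where
  cObj : ∀ {A : C}, Fib P A → C
  cArr : ∀ {A : C} (α : Fib P A), cObj α ⟶ A
  cTop : ∀ {A : C} (α : Fib P A), rmap P (cArr α) α = ⊤
  cUniv : ∀ {A : C} (α : Fib P A) {Y : C} (f : Y ⟶ A),
    rmap P f α = ⊤ → ∃ k : Y ⟶ cObj α, k ≫ cArr α = f

/-- Full comprehension. -/
def Comprehension.Full (hC : Comprehension P) : Prop :=
  ∀ {A : C} (α β : Fib P A), α ≤ β ↔ rmap P (hC.cArr α) β = ⊤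

/-- Strong comprehension: comprehension arrows are monic. -/
def Comprehension.Strong (hC : Comprehension P) : Prop :=
  ∀ {A : C} (α : Fib P A), Mono (hC.cArr α)

/-- `P`-injective arrow. -/
def PInj (hE : IsElementary P) {X A : C} (f : X ⟶ A) : Prop :=
  rmap P (prod.map f f) (hE.δ A) = hE.δ X

/-- `P`-surjective arrow. -/
def PSurj (hEx : IsExistential P) {X A : C} (f : X ⟶ A) : Prop :=
  hEx.E f (⊤ : Fib P X) = ⊤

/-- The product relation `ρ ⊠ σ` on `(A ⨯ B) ⨯ (A ⨯ B)`. -/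
def boxprod {A B : C} (ρ : Fib P (A ⨯ A)) (σ : Fib P (B ⨯ B)) :
    Fib P ((A ⨯ B) ⨯ (A ⨯ B)) :=
  rmap P (prod.map prod.fst prod.fst) ρ ⊓ rmap P (prod.map prod.snd prod.snd) σ

/-- The hom condition of the elementary quotient completion: `f : A ⟶ B`
represents an arrow `(A,ρ) ⟶ (B,σ)` iff `ρ ≤ P(f×f)(σ)`. -/
def QHomC {A B : C} (ρ : Fib P (A ⨯ A)) (σ : Fib P (B ⨯ B)) (f : A ⟶ B) : Prop :=
  ρ ≤ rmap P (prod.map f f) σ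

/-- The equivalence on representatives: `f ∼ g` iff `⊤ = P⟨f,g⟩(σ)`. -/
def QEq {A B : C} (σ : Fib P (B ⨯ B)) (f g : A ⟶ B) : Prop :=
  rmap P (prod.lift f g) σ = ⊤

attribute [local simp] prod.lift_fst prod.lift_snd prod.lift_fst_assoc prod.lift_snd_assoc

section Aux

variable {P}

lemma rmap_comp' {A B D : C} (f : A ⟶ B) (g : B ⟶ D) (x : Fib P D) :
    rmap P (f ≫ g) x = rmap P f (rmap P g x) := by
  show (P.map (f ≫ g).op) x = _
  rw [op_comp, P.map_comp]; rfl

lemma rmap_mono {A B : C} (f : A ⟶ B) {x y : Fib P B} (h : x ≤ y) :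
    rmap P f x ≤ rmap P f y :=
  OrderHomClass.mono (show InfTopHom _ _ from P.map f.op) h

lemma rmap_inf {A B : C} (f : A ⟶ B) (x y : Fib P B) :
    rmap P f (x ⊓ y) = rmap P f x ⊓ rmap P f y :=
  map_inf (show InfTopHom _ _ from P.map f.op) _ _

lemma rmap_top {A B : C} (f : A ⟶ B) : rmap P f (⊤ : Fib P B) = ⊤ :=
  map_top (show InfTopHom _ _ from P.map f.op)

lemma rmap_id {A : C} (x : Fib P A) : rmap P (𝟙 A) x = x := by
  show (P.map (𝟙 A).op) x = x
  rw [op_id, P.map_id]; rfl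

lemma rmap_congr {A B : C} {f g : A ⟶ B} (h : f = g) (x : Fib P B) :
    rmap P f x = rmap P g x := by rw [h]

/-- Reflexivity of fibered equality: `P⟨g,g⟩(δ) = ⊤`. -/
lemma refl_top (hE : IsElementary P) {Y A : C} (g : Y ⟶ A) :
    rmap P (prod.lift g g) (hE.δ A) = ⊤ := by
  have h1 : (⊤ : Fib P (A ⨯ A)) ≤ rmap P (prod.lift (𝟙 (A ⨯ A)) prod.snd)
      (rmap P (prod.fst : (A ⨯ A) ⨯ A ⟶ A ⨯ A) (⊤ : Fib P (A ⨯ A)) ⊓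
        rmap P (prod.lift (prod.fst ≫ prod.snd) prod.snd : (A ⨯ A) ⨯ A ⟶ A ⨯ A) (hE.δ A)) :=
    (hE.adj A A ⊤ _).mp le_rfl
  rw [rmap_inf, ← rmap_comp', ← rmap_comp', rmap_top] at h1
  have heq : (prod.lift (𝟙 (A ⨯ A)) prod.snd ≫ prod.lift (prod.fst ≫ prod.snd) prod.snd :
      A ⨯ A ⟶ A ⨯ A) = prod.lift prod.snd prod.snd := by
    apply Limits.prod.hom_ext <;> simp
  have h2 : (⊤ : Fib P (A ⨯ A)) ≤
      rmap P (prod.lift (prod.snd) (prod.snd) : A ⨯ A ⟶ A ⨯ A) (hE.δ A) := by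
    rw [← heq]; exact le_trans h1 inf_le_right
  have h3 := rmap_mono (prod.lift g g) h2
  rw [rmap_top, ← rmap_comp'] at h3
  rw [rmap_congr (f := prod.lift g g ≫ prod.lift prod.snd prod.snd) (g := prod.lift g g)] at h3
  · exact le_antisymm le_top h3
  · apply Limits.prod.hom_ext <;> simp

/-- The counit of the adjunction defining elementariness. -/
lemma counit (hE : IsElementary P) (X A : C) (β : Fib P ((X ⨯ A) ⨯ A)) :
    rmap P (prod.fst ≫ prod.lift (𝟙 (X ⨯ A)) prod.snd : (X ⨯ A) ⨯ A ⟶ (X ⨯ A) ⨯ A) β ⊓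
      rmap P (prod.lift (prod.fst ≫ prod.snd) prod.snd : (X ⨯ A) ⨯ A ⟶ A ⨯ A) (hE.δ A) ≤ β := by
  have := (hE.adj X A (rmap P (prod.lift (𝟙 (X ⨯ A)) prod.snd) β) β).mpr le_rfl
  rwa [← rmap_comp'] at this

/-- Indiscernibility (Leibniz rule with a parameter). -/
lemma leibniz (hE : IsElementary P) {Z W X' : C} (a : Z ⟶ W) (h k : Z ⟶ X')
    (γ : Fib P (W ⨯ X')) :
    rmap P (prod.lift a h) γ ⊓ rmap P (prod.lift h k) (hE.δ X') ≤
      rmap P (prod.lift a k) γ := by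
  set u : (W ⨯ X') ⨯ X' ⟶ W ⨯ X' := prod.lift (prod.fst ≫ prod.fst) prod.snd with hu
  have hc := counit hE W X' (rmap P u γ)
  rw [← rmap_comp'] at hc
  rw [rmap_congr (f := (prod.fst ≫ prod.lift (𝟙 (W ⨯ X')) prod.snd) ≫ u)
    (g := (prod.fst : (W ⨯ X') ⨯ X' ⟶ W ⨯ X'))] at hc
  · set m : Z ⟶ (W ⨯ X') ⨯ X' := prod.lift (prod.lift a h) k with hm
    have h4 := rmap_mono m hc
    rw [rmap_inf, ← rmap_comp', ← rmap_comp', ← rmap_comp'] at h4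
    rw [rmap_congr (f := m ≫ prod.fst) (g := prod.lift a h),
        rmap_congr (f := m ≫ prod.lift (prod.fst ≫ prod.snd) prod.snd) (g := prod.lift h k),
        rmap_congr (f := m ≫ u) (g := prod.lift a k)] at h4
    · exact h4
    · rw [hm, hu]; apply Limits.prod.hom_ext <;> simp
    · rw [hm]; apply Limits.prod.hom_ext <;> simp
    · rw [hm]; simp
  · rw [hu]; apply Limits.prod.hom_ext <;> simp

/-- `δ_X ≤ P(f×f)(δ_A)` for any `f : X ⟶ A`. -/
lemma delta_le (hE : IsElementary P) {X A : C} (f : X ⟶ A) :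
    hE.δ X ≤ rmap P (prod.map f f) (hE.δ A) := by
  have hl := leibniz hE (prod.fst ≫ f : X ⨯ X ⟶ A) prod.fst prod.snd
      (rmap P (prod.map (𝟙 A) f) (hE.δ A))
  rw [← rmap_comp', ← rmap_comp'] at hl
  rw [rmap_congr (f := prod.lift (prod.fst ≫ f) prod.fst ≫ prod.map (𝟙 A) f)
        (g := prod.fst ≫ prod.lift f f),
      rmap_congr (f := prod.lift (prod.fst ≫ f) prod.snd ≫ prod.map (𝟙 A) f)
        (g := prod.map f f),
      rmap_congr (f := (prod.lift prod.fst prod.snd : X ⨯ X ⟶ X ⨯ X)) (g := 𝟙 (X ⨯ X)),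
      rmap_comp', refl_top hE f, rmap_top, rmap_id] at hl
  · exact le_trans (le_inf le_top le_rfl) hl
  · apply Limits.prod.hom_ext <;> simp
  · apply Limits.prod.hom_ext <;> simp
  · apply Limits.prod.hom_ext <;> simp

/-- `δ_X ⊠ δ_Y ≤ δ_{X⨯Y}`. -/
lemma box_le (hE : IsElementary P) (X Y : C) :
    rmap P (prod.map prod.fst prod.fst : (X ⨯ Y) ⨯ (X ⨯ Y) ⟶ X ⨯ X) (hE.δ X) ⊓
      rmap P (prod.map prod.snd prod.snd : (X ⨯ Y) ⨯ (X ⨯ Y) ⟶ Y ⨯ Y) (hE.δ Y) ≤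
      hE.δ (X ⨯ Y) := by
  set Z := (X ⨯ Y) ⨯ (X ⨯ Y)
  set c1 : Z ⟶ X ⨯ Y := prod.fst with hc1
  set c2 : Z ⟶ X ⨯ Y := prod.snd with hc2
  set u : (X ⨯ Y) ⨯ X ⟶ (X ⨯ Y) ⨯ (X ⨯ Y) :=
    prod.lift prod.fst (prod.lift prod.snd (prod.fst ≫ prod.snd)) with hu
  set v : ((X ⨯ Y) ⨯ X) ⨯ Y ⟶ (X ⨯ Y) ⨯ (X ⨯ Y) :=
    prod.lift (prod.fst ≫ prod.fst) (prod.lift (prod.fst ≫ prod.snd) prod.snd) with hv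
  -- Step 1 : replace the X-component
  have h1 := leibniz hE c1 (c1 ≫ prod.fst) (c2 ≫ prod.fst) (rmap P u (hE.δ (X ⨯ Y)))
  rw [← rmap_comp', ← rmap_comp'] at h1
  rw [rmap_congr (f := prod.lift c1 (c1 ≫ prod.fst) ≫ u) (g := prod.lift c1 c1),
      refl_top hE c1,
      rmap_congr (f := prod.lift (c1 ≫ prod.fst) (c2 ≫ prod.fst))
        (g := (prod.map prod.fst prod.fst : Z ⟶ X ⨯ X))] at h1
  · -- Step 2 : replace the Y-component
    have h2 := leibniz hE (prod.lift c1 (c2 ≫ prod.fst)) (c1 ≫ prod.snd) (c2 ≫ prod.snd)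
        (rmap P v (hE.δ (X ⨯ Y)))
    rw [← rmap_comp', ← rmap_comp'] at h2
    rw [rmap_congr (f := prod.lift (prod.lift c1 (c2 ≫ prod.fst)) (c1 ≫ prod.snd) ≫ v)
          (g := prod.lift c1 (c2 ≫ prod.fst) ≫ u),
        rmap_congr (f := prod.lift (c1 ≫ prod.snd) (c2 ≫ prod.snd))
          (g := (prod.map prod.snd prod.snd : Z ⟶ Y ⨯ Y)),
        rmap_congr (f := prod.lift (prod.lift c1 (c2 ≫ prod.fst)) (c2 ≫ prod.snd) ≫ v)
          (g := 𝟙 Z), rmap_id, rmap_comp'] at h2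
    · rw [rmap_comp'] at h1
      exact le_trans (le_inf (le_trans (le_inf le_top inf_le_left) h1) inf_le_right) h2
    · rw [hv, hc1, hc2]; apply Limits.prod.hom_ext
      · simp
      · apply Limits.prod.hom_ext <;> simp
    · rw [hc1, hc2]; apply Limits.prod.hom_ext <;> simp
    · rw [hv, hu, hc1, hc2]; apply Limits.prod.hom_ext
      · simp
      · apply Limits.prod.hom_ext <;> simp
  · rw [hc1, hc2]; apply Limits.prod.hom_ext <;> simp
  · rw [hu, hc1]; apply Limits.prod.hom_ext
    · simp
    · apply Limits.prod.hom_ext <;> simp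

end Aux

/-- For an elementary doctrine with comprehensive diagonals,
the functor `∇_P : C ⥤ Q_P`, `f ↦ [f] : (X,δ_X) ⟶ (Y,δ_Y)`, is well defined,
full and faithful, and preserves binary products. -/
theorem nabla_fully_faithful_preserves_products
    (hE : IsElementary P) (hcd : ComprehensiveDiagonals P hE) :
    (∀ {X Y : C} (f : X ⟶ Y), QHomC P (hE.δ X) (hE.δ Y) f) ∧
    (∀ {X Y : C} (f g : X ⟶ Y), QEq P (hE.δ Y) f g → f = g) ∧
    (∀ {X Y : C} (g : X ⟶ Y), QHomC P (hE.δ X) (hE.δ Y) g →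
      ∃ f : X ⟶ Y, QEq P (hE.δ Y) f g) ∧
    (∀ X Y : C,
      QHomC P (hE.δ (X ⨯ Y)) (hE.δ X) prod.fst ∧
      QHomC P (hE.δ (X ⨯ Y)) (hE.δ Y) prod.snd ∧
      ∀ {T : C} (τ : Fib P (T ⨯ T)), IsEqRel P hE τ →
        ∀ (h : T ⟶ X) (k : T ⟶ Y), QHomC P τ (hE.δ X) h → QHomC P τ (hE.δ Y) k →
          ∃ m : T ⟶ X ⨯ Y, QHomC P τ (hE.δ (X ⨯ Y)) m ∧
            QEq P (hE.δ X) (m ≫ prod.fst) h ∧ QEq P (hE.δ Y) (m ≫ prod.snd) k ∧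
            ∀ m' : T ⟶ X ⨯ Y, QHomC P τ (hE.δ (X ⨯ Y)) m' →
              QEq P (hE.δ X) (m' ≫ prod.fst) h → QEq P (hE.δ Y) (m' ≫ prod.snd) k →
                QEq P (hE.δ (X ⨯ Y)) m m') := by
  have refl' : ∀ {Y A : C} (g : Y ⟶ A), QEq P (hE.δ A) g g := fun g => refl_top hE g
  refine ⟨fun {X Y} f => delta_le hE f, fun {X Y} f g hfg => (hcd f g).mpr hfg,
    fun {X Y} g _ => ⟨g, refl' g⟩, fun X Y => ⟨delta_le hE prod.fst, delta_le hE prod.snd, ?_⟩⟩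
  intro T τ _ h k hh hk
  refine ⟨prod.lift h k, ?_, ?_, ?_, ?_⟩
  · -- QHomC τ (δ (X ⨯ Y)) ⟨h,k⟩
    unfold QHomC at hh hk ⊢
    have step : τ ≤ rmap P (prod.map (prod.lift h k) (prod.lift h k))
        (rmap P (prod.map prod.fst prod.fst : (X ⨯ Y) ⨯ (X ⨯ Y) ⟶ X ⨯ X) (hE.δ X) ⊓
          rmap P (prod.map prod.snd prod.snd : (X ⨯ Y) ⨯ (X ⨯ Y) ⟶ Y ⨯ Y) (hE.δ Y)) := by
      rw [rmap_inf, ← rmap_comp', ← rmap_comp',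
        rmap_congr (f := prod.map (prod.lift h k) (prod.lift h k) ≫ prod.map prod.fst prod.fst)
          (g := prod.map h h),
        rmap_congr (f := prod.map (prod.lift h k) (prod.lift h k) ≫ prod.map prod.snd prod.snd)
          (g := prod.map k k)]
      · exact le_inf hh hk
      · apply Limits.prod.hom_ext <;> simp
      · apply Limits.prod.hom_ext <;> simp
    exact le_trans step (rmap_mono _ (box_le hE X Y))
  · unfold QEq
    rw [rmap_congr (f := prod.lift (prod.lift h k ≫ prod.fst) h) (g := prod.lift h h)]
    · exact refl' h
    · apply Limits.prod.hom_ext <;> simp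
  · unfold QEq
    rw [rmap_congr (f := prod.lift (prod.lift h k ≫ prod.snd) k) (g := prod.lift k k)]
    · exact refl' k
    · apply Limits.prod.hom_ext <;> simp
  · intro m' _ hf hs
    have h1 : m' ≫ prod.fst = h := (hcd _ _).mpr hf
    have h2 : m' ≫ prod.snd = k := (hcd _ _).mpr hs
    have hm : m' = prod.lift h k := by
      apply Limits.prod.hom_ext <;> simp [h1, h2]
    rw [hm]
    exact refl' (prod.lift h k)

end DoctrinePaper
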